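/- (Ding–Song–Sun inequality, two-spin case) For the two-spin ferromagnetic Ising model with Hamiltonian −βσ_uσ_v − h_uσ_u − h_vσ_v, β ≥ 0, the covariance ⟨σ_u;σ_v⟩^{h} is maximized at h_u = h_v = 0: ⟨σ_u;σ_v⟩^{(h_u,h_v)} ≤ ⟨σ_uσ_v⟩^{(0,0)} = tanh(β), for all real h_u, h_v. -/
import Mathlib


open Finset Real

def spin (b : Bool) : ℝ := if b then 1 else -1

/-- The two-spin Ising measure `μ(σ_u,σ_v) ∝ exp(βσ_uσ_v + h_uσ_u + h_vσ_v)`. -/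
noncomputable def μ2 (β hu hv : ℝ) (σ : Bool × Bool) : ℝ :=
  exp (β * spin σ.1 * spin σ.2 + hu * spin σ.1 + hv * spin σ.2) /
    ∑ σ' : Bool × Bool, exp (β * spin σ'.1 * spin σ'.2 + hu * spin σ'.1 + hv * spin σ'.2)

/-- The covariance `⟨σ_u;σ_v⟩` of the two spins. -/
noncomputable def cov2 (β hu hv : ℝ) : ℝ :=
  (∑ σ : Bool × Bool, spin σ.1 * spin σ.2 * μ2 β hu hv σ) -
    (∑ σ : Bool × Bool, spin σ.1 * μ2 β hu hv σ) *
      (∑ σ : Bool × Bool, spin σ.2 * μ2 β hu hv σ)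

lemma cov2_eq (β hu hv : ℝ) :
    cov2 β hu hv = 4 * (exp β ^ 2 - (exp β)⁻¹ ^ 2) /
      (exp β * exp hu * exp hv + (exp β)⁻¹ * exp hu * (exp hv)⁻¹ +
        (exp β)⁻¹ * (exp hu)⁻¹ * exp hv + exp β * (exp hu)⁻¹ * (exp hv)⁻¹) ^ 2 := by
  have hr := exp_pos β
  have hp := exp_pos hu
  have hq := exp_pos hv
  unfold cov2 μ2
  simp only [Fintype.sum_prod_type, Fintype.sum_bool, spin, if_true, if_false]
  norm_num [exp_add, exp_neg]
  have hZ : exp β * exp hu * exp hv + (exp β)⁻¹ * exp hu * (exp hv)⁻¹ +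
      ((exp β)⁻¹ * (exp hu)⁻¹ * exp hv + exp β * (exp hu)⁻¹ * (exp hv)⁻¹) ≠ 0 := by positivity
  field_simp
  ring

lemma sum0_eq (β : ℝ) :
    ∑ σ : Bool × Bool, spin σ.1 * spin σ.2 * μ2 β 0 0 σ = tanh β := by
  have hr := exp_pos β
  have hr' := exp_pos (-β)
  unfold μ2
  simp only [Fintype.sum_prod_type, Fintype.sum_bool, spin, if_true, if_false]
  rw [Real.tanh_eq_sinh_div_cosh, Real.sinh_eq, Real.cosh_eq]
  norm_num [exp_neg]
  field_simp
  ring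


/-- Ding–Song–Sun inequality, two-spin case: the covariance is maximized at zero
field, where it equals `tanh β`. -/
theorem stmt11 (β hu hv : ℝ) (hβ : 0 ≤ β) :
    cov2 β hu hv ≤ ∑ σ : Bool × Bool, spin σ.1 * spin σ.2 * μ2 β 0 0 σ ∧
    ∑ σ : Bool × Bool, spin σ.1 * spin σ.2 * μ2 β 0 0 σ = tanh β := by
  refine ⟨?_, sum0_eq β⟩
  rw [sum0_eq β, cov2_eq]
  have hr := exp_pos β
  have hp := exp_pos hu
  have hq := exp_pos hv
  have hr1 : 1 ≤ exp β := one_le_exp hβ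
  have hN : 0 ≤ 4 * (exp β ^ 2 - (exp β)⁻¹ ^ 2) := by
    have : (exp β)⁻¹ ≤ exp β := by
      rw [inv_le_iff_one_le_mul₀ hr]
      nlinarith
    nlinarith [inv_pos.mpr hr]
  have hZ0 : (0:ℝ) < exp β + (exp β)⁻¹ := by positivity
  have hZ : exp β + (exp β)⁻¹ + (exp β + (exp β)⁻¹) ≤
      exp β * exp hu * exp hv + (exp β)⁻¹ * exp hu * (exp hv)⁻¹ +
        (exp β)⁻¹ * (exp hu)⁻¹ * exp hv + exp β * (exp hu)⁻¹ * (exp hv)⁻¹ := by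
    have aux : ∀ x : ℝ, 0 < x → 2 ≤ x + x⁻¹ := by
      intro x hx
      nlinarith [sq_nonneg (x - 1), mul_inv_cancel₀ hx.ne', inv_pos.mpr hx]
    have h1 : 2 ≤ exp hu * exp hv + (exp hu)⁻¹ * (exp hv)⁻¹ := by
      rw [← mul_inv]; exact aux _ (by positivity)
    have h2 : 2 ≤ exp hu * (exp hv)⁻¹ + (exp hu)⁻¹ * exp hv := by
      have := aux (exp hu * (exp hv)⁻¹) (by positivity)
      rwa [mul_inv, inv_inv] at this
    nlinarith [inv_pos.mpr hr]
  have key : 4 * (exp β ^ 2 - (exp β)⁻¹ ^ 2) /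
      (exp β * exp hu * exp hv + (exp β)⁻¹ * exp hu * (exp hv)⁻¹ +
        (exp β)⁻¹ * (exp hu)⁻¹ * exp hv + exp β * (exp hu)⁻¹ * (exp hv)⁻¹) ^ 2 ≤
      4 * (exp β ^ 2 - (exp β)⁻¹ ^ 2) / (exp β + (exp β)⁻¹ + (exp β + (exp β)⁻¹)) ^ 2 := by
    gcongr
    all_goals first | positivity | linarith
  refine key.trans ?_
  rw [Real.tanh_eq_sinh_div_cosh, Real.sinh_eq, Real.cosh_eq]
  have hc : exp β + exp (-β) ≠ 0 := by positivity
  rw [exp_neg]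
  rw [div_le_div_iff₀ (by positivity) (by positivity)]
  field_simp
  ring_nf
  nlinarith [inv_pos.mpr hr, mul_inv_cancel₀ (ne_of_gt hr)]
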